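/- If w ∈ ℂ, α ≥ 0, γ ∈ ℝ and for all real θ one has Re(w(1 + α e^{iθ}) - α e^{iθ}) > γ, then Re(w) > α|w - 1| + γ. -/

import Mathlib

theorem re_gt_abs_of_forall_theta (w : ℂ) (α γ : ℝ) (hα : 0 ≤ α)
    (h : ∀ θ : ℝ, (w * (1 + (α : ℂ) * Complex.exp (θ * Complex.I))
        - (α : ℂ) * Complex.exp (θ * Complex.I)).re > γ) :
    w.re > α * ‖w - 1‖ + γ := by
  set z := w - 1 with hzdef
  rcases eq_or_ne z 0 with hz | hz
  · have hw : w = 1 := by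
      have := sub_eq_zero.mp hz; exact this
    subst hw
    simpa [hz] using h 0
  · set θ := Real.pi - z.arg with hθ
    have key := h θ
    set e := Complex.exp ((θ : ℂ) * Complex.I) with he
    have hze : z * e = -((‖z‖ : ℝ) : ℂ) := by
      calc z * e = ((‖z‖ : ℝ) : ℂ) * Complex.exp (z.arg * Complex.I) * e := by
            rw [Complex.norm_mul_exp_arg_mul_I]
        _ = ((‖z‖ : ℝ) : ℂ) * Complex.exp ((z.arg + θ) * Complex.I) := by
            rw [mul_assoc, ← Complex.exp_add, ← add_mul]
        _ = ((‖z‖ : ℝ) : ℂ) * Complex.exp (Real.pi * Complex.I) := by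
            rw [hθ]; push_cast; ring_nf
        _ = -((‖z‖ : ℝ) : ℂ) := by rw [Complex.exp_pi_mul_I]; ring
    have heq : w * (1 + (α : ℂ) * e) - (α : ℂ) * e
        = w - ((α * ‖z‖ : ℝ) : ℂ) := by
      have h1 : w * (1 + (α : ℂ) * e) - (α : ℂ) * e = w + (α : ℂ) * (z * e) := by
        rw [hzdef]; ring
      rw [h1, hze]; push_cast; ring
    rw [heq] at key
    simp only [Complex.sub_re, Complex.ofReal_re] at key
    linarith
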